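/- The Jacobian matrix J of the rational map f at the point p = (1/2,…,1/2) is given by J_{ij} = ∂f_i/∂u_j(p) = 1 if g_i = g_j (as columns of G in 𝔽₂^k), and J_{ij} = 0 if g_i ≠ g_j, for all i, j ∈ {1,…,n}. -/

import Mathlib

open Matrix Finset

/-- The codeword polynomial `F_x(u) = ∏ i, ρ_i(u_i)` with `ρ_i(u_i) = u_i` if `x_i = 1`
and `1 - u_i` if `x_i = 0`. -/
noncomputable def codePoly {n : ℕ} (x : Fin n → ZMod 2) (u : Fin n → ℝ) : ℝ :=
  ∏ i, if x i = 1 then u i else 1 - u i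

/-- The linear code `C = {mG : m ∈ 𝔽₂^k}` generated by the matrix `G`. -/
def code {k n : ℕ} (G : Matrix (Fin k) (Fin n) (ZMod 2)) : Finset (Fin n → ZMod 2) :=
  Finset.image (fun m => Matrix.vecMul m G) Finset.univ

/-- `H(u) = Σ_{x ∈ C} F_x(u)`. -/
noncomputable def Hfun {k n : ℕ} (G : Matrix (Fin k) (Fin n) (ZMod 2)) (u : Fin n → ℝ) : ℝ :=
  ∑ x ∈ code G, codePoly x u

/-- `I_i(u) = Σ_{x ∈ C, x_i = 1} F_x(u)`. -/
noncomputable def Ifun {k n : ℕ} (G : Matrix (Fin k) (Fin n) (ZMod 2)) (i : Fin n)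
    (u : Fin n → ℝ) : ℝ :=
  ∑ x ∈ (code G).filter (fun x => x i = 1), codePoly x u

/-- The rational map `f_i(u) = I_i(u)/H(u)`. -/
noncomputable def fmap {k n : ℕ} (G : Matrix (Fin k) (Fin n) (ZMod 2)) (i : Fin n)
    (u : Fin n → ℝ) : ℝ :=
  Ifun G i u / Hfun G u

/-- The point `p = (1/2, …, 1/2) ∈ ℝ^n`. -/
noncomputable def pcenter (n : ℕ) : Fin n → ℝ := fun _ => 1/2

/-- Identification of a binary word with a 0/1 point of `ℝ^n`. -/
noncomputable def embed {n : ℕ} (w : Fin n → ZMod 2) : Fin n → ℝ :=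
  fun i => if w i = 1 then 1 else 0

noncomputable def chi (t : ZMod 2) : ℝ := if t = 1 then -1 else 1

lemma zmod2_cases (a : ZMod 2) : a = 0 ∨ a = 1 := by revert a; decide

lemma chi_zero : chi 0 = 1 := by norm_num [chi]

lemma chi_add (a b : ZMod 2) : chi (a + b) = chi a * chi b := by
  rcases zmod2_cases a with ha | ha <;> rcases zmod2_cases b with hb | hb <;>
    subst ha <;> subst hb <;>
    norm_num [chi, show (1 + 1 : ZMod 2) = 0 by decide] <;> try decide

lemma chi_sum {ι : Type*} (s : Finset ι) (f : ι → ZMod 2) :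
    chi (∑ r ∈ s, f r) = ∏ r ∈ s, chi (f r) := by
  classical
  induction s using Finset.cons_induction with
  | empty => simp [chi_zero]
  | cons a s ha ih => rw [Finset.sum_cons, Finset.prod_cons, chi_add, ih]

lemma Tsum {k : ℕ} (c : Fin k → ZMod 2) :
    ∑ m : Fin k → ZMod 2, chi (m ⬝ᵥ c) = if c = 0 then (2 : ℝ) ^ k else 0 := by
  classical
  have h1 : ∀ m : Fin k → ZMod 2, chi (m ⬝ᵥ c) = ∏ r, chi (m r * c r) := fun m =>
    chi_sum _ _
  have h2 : (∑ m : Fin k → ZMod 2, ∏ r, chi (m r * c r))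
      = ∏ r, ∑ t : ZMod 2, chi (t * c r) := by
    rw [Finset.prod_univ_sum]
    rw [Fintype.piFinset_univ]
  have huniv : (Finset.univ : Finset (ZMod 2)) = {0, 1} := by decide
  have h3 : ∀ r, (∑ t : ZMod 2, chi (t * c r)) = if c r = 0 then (2 : ℝ) else 0 := by
    intro r
    rw [huniv, Finset.sum_insert (by decide), Finset.sum_singleton]
    rcases zmod2_cases (c r) with h | h <;> norm_num [h, chi]
  rw [Finset.sum_congr rfl fun m _ => h1 m, h2, Finset.prod_congr rfl fun r _ => h3 r]
  by_cases hc : c = 0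
  · simp [hc, Finset.prod_const]
  · rw [if_neg hc]
    obtain ⟨r, hr⟩ : ∃ r, c r ≠ 0 := by
      by_contra h
      push_neg at h
      exact hc (funext h)
    exact Finset.prod_eq_zero (Finset.mem_univ r) (by rw [if_neg hr])

lemma vecMul_inj {k n : ℕ} (G : Matrix (Fin k) (Fin n) (ZMod 2)) (hrank : G.rank = k) :
    Function.Injective (fun m : Fin k → ZMod 2 => m ᵥ* G) := by
  haveI : Fact (Nat.Prime 2) := ⟨by norm_num⟩
  have h1 : Gᵀ.rank = k := by rw [Matrix.rank_transpose]; exact hrank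
  have h1' : Module.finrank (ZMod 2) (LinearMap.range Gᵀ.mulVecLin) = k := h1
  have h2 := LinearMap.finrank_range_add_finrank_ker (Gᵀ.mulVecLin)
  rw [h1', Module.finrank_fin_fun] at h2
  have h3 : Module.finrank (ZMod 2) (LinearMap.ker Gᵀ.mulVecLin) = 0 := by omega
  have h4 : LinearMap.ker Gᵀ.mulVecLin = ⊥ := Submodule.finrank_eq_zero.mp h3
  have h5 : Function.Injective Gᵀ.mulVecLin := LinearMap.ker_eq_bot.mp h4
  intro a b hab
  apply h5
  simp only [Matrix.mulVecLin_apply, Matrix.mulVec_transpose]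
  exact hab

noncomputable def Dmap {n : ℕ} (x : Fin n → ZMod 2) : (Fin n → ℝ) →L[ℝ] ℝ :=
  ∑ r, ((1 / 2 : ℝ) ^ (n - 1) * (-chi (x r))) •
    (ContinuousLinearMap.proj r : (Fin n → ℝ) →L[ℝ] ℝ)

lemma hasFDerivAt_codePoly {n : ℕ} (x : Fin n → ZMod 2) :
    HasFDerivAt (codePoly x) (Dmap x) (pcenter n) := by
  classical
  have hfac : ∀ r : Fin n,
      HasFDerivAt (fun u : Fin n → ℝ => if x r = 1 then u r else 1 - u r)
        ((-chi (x r)) • (ContinuousLinearMap.proj r : (Fin n → ℝ) →L[ℝ] ℝ)) (pcenter n) := by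
    intro r
    by_cases h : x r = 1
    · simp only [h, if_true, chi, if_pos rfl, neg_neg, one_smul]
      exact (ContinuousLinearMap.proj r : (Fin n → ℝ) →L[ℝ] ℝ).hasFDerivAt
    · simp only [h, if_false, chi, neg_one_smul]
      have h1 : HasFDerivAt (fun u : Fin n → ℝ => u r)
          (ContinuousLinearMap.proj r : (Fin n → ℝ) →L[ℝ] ℝ) (pcenter n) :=
        (ContinuousLinearMap.proj r : (Fin n → ℝ) →L[ℝ] ℝ).hasFDerivAt
      have := (hasFDerivAt_const (1 : ℝ) (pcenter n)).sub h1
      have heq : (0 : (Fin n → ℝ) →L[ℝ] ℝ) - ContinuousLinearMap.proj r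
          = (-1 : ℝ) • (ContinuousLinearMap.proj r : (Fin n → ℝ) →L[ℝ] ℝ) := by
        ext v; simp
      rw [heq] at this
      exact this
  have hprod := HasFDerivAt.finset_prod (u := (Finset.univ : Finset (Fin n)))
    (fun r _ => hfac r)
  have hfe : codePoly x = (∏ r ∈ Finset.univ, (fun u : Fin n → ℝ =>
      if x r = 1 then u r else 1 - u r) ·) := rfl
  rw [hfe]
  refine hprod.congr_fderiv ?_
  apply Finset.sum_congr rfl
  intro r _
  have hp : ∀ l ∈ Finset.univ.erase r,
      (if x l = 1 then pcenter n l else 1 - pcenter n l) = (1 / 2 : ℝ) := by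
    intro l _
    by_cases h : x l = 1 <;> simp [h, pcenter] <;> norm_num
  rw [Finset.prod_congr rfl hp, Finset.prod_const,
    Finset.card_erase_of_mem (Finset.mem_univ r), Finset.card_univ, Fintype.card_fin,
    smul_smul]

lemma Dmap_apply {n : ℕ} (x : Fin n → ZMod 2) (j : Fin n) :
    Dmap x (Pi.single j 1) = (1 / 2 : ℝ) ^ (n - 1) * (-chi (x j)) := by
  classical
  rw [Dmap, ContinuousLinearMap.sum_apply]
  rw [Finset.sum_eq_single j]
  · simp
  · intro r _ hr
    rw [ContinuousLinearMap.smul_apply, ContinuousLinearMap.proj_apply,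
      Pi.single_eq_of_ne hr]
    simp
  · intro h; exact absurd (Finset.mem_univ j) h

/-- The Jacobian matrix `J` of the rational map `f` at `p = (1/2,…,1/2)` satisfies
`J_{ij} = 1` if the columns `g_i = g_j` and `J_{ij} = 0` otherwise. -/
theorem stmt6 {k n : ℕ} (hk : 0 < k) (hkn : k ≤ n)
    (G : Matrix (Fin k) (Fin n) (ZMod 2))
    (hrank : G.rank = k) (hcols : ∀ i : Fin n, Gᵀ i ≠ 0) (i j : Fin n) :
    fderiv ℝ (fmap G i) (pcenter n) (Pi.single j 1) = if Gᵀ i = Gᵀ j then 1 else 0 := by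
  classical
  have hn : 0 < n := lt_of_lt_of_le hk hkn
  have hinj : Function.Injective (fun m : Fin k → ZMod 2 => m ᵥ* G) := vecMul_inj G hrank
  have hxj : ∀ (m : Fin k → ZMod 2) (l : Fin n), (m ᵥ* G) l = m ⬝ᵥ Gᵀ l := fun m l => rfl
  have hcode : code G = Finset.image (fun m : Fin k → ZMod 2 => m ᵥ* G) Finset.univ := rfl
  -- value of H at p
  have hcodePoly_p : ∀ x : Fin n → ZMod 2, codePoly x (pcenter n) = (1 / 2 : ℝ) ^ n := by
    intro x
    unfold codePoly
    rw [Finset.prod_congr rfl (fun l _ => show (if x l = 1 then pcenter n l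
        else 1 - pcenter n l) = (1 / 2 : ℝ) by
      by_cases h : x l = 1 <;> simp [h, pcenter] <;> norm_num),
      Finset.prod_const, Finset.card_univ, Fintype.card_fin]
  have hHp : Hfun G (pcenter n) = (2 : ℝ) ^ k * (1 / 2) ^ n := by
    unfold Hfun
    rw [Finset.sum_congr rfl (fun x _ => hcodePoly_p x), Finset.sum_const, hcode,
      Finset.card_image_of_injective _ hinj, Finset.card_univ, Fintype.card_fun,
      Fintype.card_fin, ZMod.card]
    simp [nsmul_eq_mul]
  have hHp_pos : (0 : ℝ) < Hfun G (pcenter n) := by rw [hHp]; positivity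
  have hHne : Hfun G (pcenter n) ≠ 0 := ne_of_gt hHp_pos
  -- the derivatives of H and I
  have hH : HasFDerivAt (Hfun G) (∑ x ∈ code G, Dmap x) (pcenter n) :=
    HasFDerivAt.fun_sum (fun x _ => hasFDerivAt_codePoly x)
  have hI : HasFDerivAt (Ifun G i)
      (∑ x ∈ (code G).filter (fun x => x i = 1), Dmap x) (pcenter n) :=
    HasFDerivAt.fun_sum (fun x _ => hasFDerivAt_codePoly x)
  -- value of H' at the direction
  have hH' : (∑ x ∈ code G, Dmap x) (Pi.single j 1) = 0 := by
    rw [ContinuousLinearMap.sum_apply, hcode,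
      Finset.sum_image (fun a _ b _ h => hinj h)]
    have h0 : ∑ m : Fin k → ZMod 2, chi (m ⬝ᵥ Gᵀ j) = 0 := by
      rw [Tsum]; exact if_neg (hcols j)
    calc ∑ m : Fin k → ZMod 2, Dmap (m ᵥ* G) (Pi.single j 1)
        = ∑ m : Fin k → ZMod 2, (1 / 2 : ℝ) ^ (n - 1) * (-chi (m ⬝ᵥ Gᵀ j)) := by
          refine Finset.sum_congr rfl fun m _ => ?_
          rw [Dmap_apply, hxj]
      _ = (1 / 2 : ℝ) ^ (n - 1) * -(∑ m : Fin k → ZMod 2, chi (m ⬝ᵥ Gᵀ j)) := by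
          rw [← Finset.sum_neg_distrib, ← Finset.mul_sum]
      _ = 0 := by rw [h0]; ring
  -- value of I' at the direction
  have hI' : (∑ x ∈ (code G).filter (fun x => x i = 1), Dmap x) (Pi.single j 1)
      = if Gᵀ i = Gᵀ j then (1 / 2 : ℝ) ^ (n - 1) * 2 ^ (k - 1) else 0 := by
    rw [ContinuousLinearMap.sum_apply, Finset.sum_filter, hcode,
      Finset.sum_image (fun a _ b _ h => hinj h)]
    have key : ∀ m : Fin k → ZMod 2,
        (if (m ᵥ* G) i = 1 then Dmap (m ᵥ* G) (Pi.single j 1) else 0)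
        = (1 / 2 : ℝ) ^ (n - 1) *
            ((chi (m ⬝ᵥ (Gᵀ i + Gᵀ j)) - chi (m ⬝ᵥ Gᵀ j)) / 2) := by
      intro m
      have ha : m ⬝ᵥ (Gᵀ i + Gᵀ j) = m ⬝ᵥ Gᵀ i + m ⬝ᵥ Gᵀ j := dotProduct_add m _ _
      have hci : (m ᵥ* G) i = m ⬝ᵥ Gᵀ i := hxj m i
      rcases zmod2_cases (m ⬝ᵥ Gᵀ i) with h | h
      · rw [if_neg (by rw [hci, h]; decide), ha, h, zero_add]
        ring
      · rw [if_pos (by rw [hci, h]), Dmap_apply, hxj, ha, h, chi_add,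
          show chi 1 = -1 from by norm_num [chi]]
        ring
    rw [Finset.sum_congr rfl fun m _ => key m, ← Finset.mul_sum, ← Finset.sum_div]
    rw [Finset.sum_sub_distrib]
    have h0 : ∑ m : Fin k → ZMod 2, chi (m ⬝ᵥ Gᵀ j) = 0 := by
      rw [Tsum]; exact if_neg (hcols j)
    have hadd : (Gᵀ i + Gᵀ j = 0) ↔ Gᵀ i = Gᵀ j := by
      have h2 : ∀ a b : ZMod 2, a + b = 0 ↔ a = b := by decide
      constructor
      · intro h; funext r; exact (h2 _ _).1 (congrFun h r)
      · intro h
        funext r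
        exact (h2 _ _).2 (congrFun h r)
    rw [h0, sub_zero, Tsum]
    by_cases heq : Gᵀ i = Gᵀ j
    · rw [if_pos (hadd.2 heq), if_pos heq]
      have hk1 : k - 1 + 1 = k := Nat.succ_pred_eq_of_pos hk
      have e2 : (2 : ℝ) ^ k = 2 ^ (k - 1) * 2 := by rw [← pow_succ, hk1]
      rw [e2]
      ring
    · rw [if_neg (fun h => heq (hadd.1 h)), if_neg heq]
      ring
  -- assemble the derivative of the quotient
  have hinv : HasFDerivAt (fun u => (Hfun G u)⁻¹)
      ((ContinuousLinearMap.smulRight (1 : ℝ →L[ℝ] ℝ)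
          (-(Hfun G (pcenter n) ^ 2)⁻¹)).comp (∑ x ∈ code G, Dmap x)) (pcenter n) :=
    (hasFDerivAt_inv hHne).comp (pcenter n) hH
  have hmul := hI.mul hinv
  have hfm : fmap G i = fun u => Ifun G i u * (Hfun G u)⁻¹ := by
    funext u; exact div_eq_mul_inv _ _
  have hfd : fderiv ℝ (fmap G i) (pcenter n)
      = Ifun G i (pcenter n) • ((ContinuousLinearMap.smulRight (1 : ℝ →L[ℝ] ℝ)
          (-(Hfun G (pcenter n) ^ 2)⁻¹)).comp (∑ x ∈ code G, Dmap x))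
        + (Hfun G (pcenter n))⁻¹ • (∑ x ∈ (code G).filter (fun x => x i = 1), Dmap x) := by
    rw [hfm]
    exact hmul.fderiv
  rw [hfd, ContinuousLinearMap.add_apply, ContinuousLinearMap.smul_apply,
    ContinuousLinearMap.smul_apply, ContinuousLinearMap.comp_apply, hH', hI',
    map_zero, smul_zero, zero_add]
  by_cases heq : Gᵀ i = Gᵀ j
  · rw [if_pos heq, if_pos heq, hHp, smul_eq_mul]
    have hn1 : n - 1 + 1 = n := Nat.succ_pred_eq_of_pos hn
    have hk1 : k - 1 + 1 = k := Nat.succ_pred_eq_of_pos hk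
    have e1 : ((1 : ℝ) / 2) ^ n = (1 / 2) ^ (n - 1) * (1 / 2) := by rw [← pow_succ, hn1]
    have e2 : (2 : ℝ) ^ k = 2 ^ (k - 1) * 2 := by rw [← pow_succ, hk1]
    rw [e1, e2]
    have h1 : ((1 : ℝ) / 2) ^ (n - 1) ≠ 0 := by positivity
    have h2 : ((2 : ℝ)) ^ (k - 1) ≠ 0 := by positivity
    field_simp
  · rw [if_neg heq, if_neg heq, smul_zero]
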